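/- arXiv:1201.0518 — 3 statements merged into one kernel-verified Lean document; each statement's English description precedes it below -/
import Mathlib

section
/- Let n ≥ 1 be an integer, let 0 ≤ i ≤ n, let D > 0 be a real number, and let r_1, …, r_n be real numbers with r_j > 0 for 1 ≤ j ≤ i and r_j < 0 for i < j ≤ n. Then the function (x_1,…,x_n) ↦ (∏_{j=1}^n x_j^{r_j}) · (1 − ∑_{j=1}^{i} log x_j + ∑_{k=i+1}^{n} log x_k)^D is integrable on the region { x ∈ (0,∞)^n : x_1 ≤ x_2 ≤ ⋯ ≤ x_i ≤ 1 ≤ x_{i+1} ≤ ⋯ ≤ x_n } with respect to the multiplicative measure ∏_{j=1}^n dx_j/x_j (the measure on (0,∞)^n whose density against n-dimensional Lebesgue measure is ∏_{j=1}^n x_j^{−1}). -/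
open MeasureTheory

section Aux

open Set

/-- Product of integrable functions on a finite product of arbitrary sigma-finite measures. -/
theorem my_pi_prod_integrable {n : ℕ} (μ : Fin n → Measure ℝ) [∀ i, SigmaFinite (μ i)]
    {f : Fin n → ℝ → ℝ} (hf : ∀ i, Integrable (f i) (μ i)) :
    Integrable (fun x : Fin n → ℝ => ∏ i, f i (x i)) (Measure.pi μ) := by
  induction n with
  | zero =>
      simp only [Finset.univ_eq_empty, Finset.prod_empty]
      refine integrable_const_iff.2 (Or.inr ?_)
      constructor
      rw [Measure.pi_univ]
      simp
  | succ n n_ih =>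
      have := ((measurePreserving_piFinSuccAbove (fun i : Fin (n + 1) => μ i) 0).symm)
      rw [← this.integrable_comp_emb (MeasurableEquiv.measurableEmbedding _)]
      simp_rw [MeasurableEquiv.piFinSuccAbove_symm_apply, Fin.insertNthEquiv,
        Fin.prod_univ_succ, Fin.insertNth_zero]
      simp only [Fin.zero_succAbove, Function.comp_def, Fin.cons_zero, Fin.cons_succ,
        Equiv.coe_fn_mk]
      have : Integrable (fun x : Fin n → ℝ => ∏ j, f (Fin.succ j) (x j))
          (Measure.pi fun j => μ (Fin.succ j)) := n_ih _ (fun i => hf _)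
      exact Integrable.mul_prod (hf 0) this

theorem my_one_add_sum_le_prod {ι : Type*} (s : Finset ι) (a : ι → ℝ)
    (h : ∀ j ∈ s, 0 ≤ a j) : 1 + ∑ j ∈ s, a j ≤ ∏ j ∈ s, (1 + a j) := by
  classical
  induction s using Finset.cons_induction with
  | empty => simp
  | cons j s hj ih =>
      rw [Finset.sum_cons, Finset.prod_cons]
      have h1 : 1 + ∑ x ∈ s, a x ≤ ∏ x ∈ s, (1 + a x) :=
        ih fun k hk => h k (Finset.mem_cons_of_mem hk)
      have ha : 0 ≤ a j := h j (Finset.mem_cons_self j s)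
      have hS : 0 ≤ ∑ x ∈ s, a x := Finset.sum_nonneg fun k hk => h k (Finset.mem_cons_of_mem hk)
      nlinarith

theorem my_rpow_bound {ε D b u : ℝ} (hε : 0 < ε) (hε1 : ε ≤ 1) (hD : 0 ≤ D) (hu : 0 ≤ u)
    (hb : ε * D ≤ b) : (1 + u) ^ D ≤ ε⁻¹ ^ D * Real.exp (b * u) := by
  have h2 : 1 + u ≤ ε⁻¹ * Real.exp (ε * u) := by
    have he : 1 + ε * u ≤ Real.exp (ε * u) := by
      have := Real.add_one_le_exp (ε * u); linarith
    have hei : (1 : ℝ) ≤ ε⁻¹ := (one_le_inv₀ hε).2 hε1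
    calc 1 + u ≤ ε⁻¹ + u := by linarith
      _ = ε⁻¹ * (1 + ε * u) := by field_simp
      _ ≤ ε⁻¹ * Real.exp (ε * u) := by
          exact mul_le_mul_of_nonneg_left he (by positivity)
  calc (1 + u) ^ D ≤ (ε⁻¹ * Real.exp (ε * u)) ^ D :=
        Real.rpow_le_rpow (by positivity) h2 hD
    _ = ε⁻¹ ^ D * Real.exp (ε * u) ^ D := Real.mul_rpow (by positivity) (Real.exp_pos _).le
    _ = ε⁻¹ ^ D * Real.exp (ε * u * D) := by rw [← Real.exp_mul]
    _ ≤ ε⁻¹ ^ D * Real.exp (b * u) := by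
        apply mul_le_mul_of_nonneg_left _ (by positivity)
        apply Real.exp_le_exp.2
        nlinarith

/-- One dimensional integrability of `x^r (1+|log x|)^D dx/x` on an interval `J ⊆ (0,∞)`, given a
dominating integrable power function. -/
theorem my_one_dim (r D C q : ℝ) (hC : 0 ≤ C) (J : Set ℝ) (hJ : MeasurableSet J)
    (hJpos : ∀ x ∈ J, 0 < x)
    (hdom : ∀ x ∈ J, x ^ r * (1 + |Real.log x|) ^ D * x⁻¹ ≤ C * x ^ q)
    (hint : IntegrableOn (fun x : ℝ => x ^ q) J volume) :
    IntegrableOn (fun x : ℝ => x ^ r * (1 + |Real.log x|) ^ D) J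
      (volume.withDensity fun x : ℝ => ENNReal.ofReal x⁻¹) := by
  rw [IntegrableOn, restrict_withDensity hJ,
    integrable_withDensity_iff (show Measurable fun x : ℝ => ENNReal.ofReal x⁻¹ from
      ENNReal.measurable_ofReal.comp measurable_inv) (ae_of_all _ fun x => ENNReal.ofReal_lt_top)]
  refine Integrable.mono' ((hint.const_mul C)) ?_ ?_
  · -- measurability
    have hGm : Measurable (fun x : ℝ => Real.exp (Real.log x * r) *
        Real.exp (Real.log (1 + |Real.log x|) * D) * (ENNReal.ofReal x⁻¹).toReal) := by
      apply Measurable.mul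
      · exact (Real.measurable_exp.comp (Real.measurable_log.mul_const r)).mul
          (Real.measurable_exp.comp ((Real.measurable_log.comp
            (measurable_const.add Real.measurable_log.abs)).mul_const D))
      · exact ENNReal.measurable_toReal.comp (ENNReal.measurable_ofReal.comp measurable_inv)
    refine hGm.aestronglyMeasurable.congr ?_
    filter_upwards [ae_restrict_mem hJ] with x hx
    have hx0 : 0 < x := hJpos x hx
    have h1 : (0:ℝ) < 1 + |Real.log x| := by positivity
    rw [← Real.rpow_def_of_pos hx0, ← Real.rpow_def_of_pos h1]
  · filter_upwards [ae_restrict_mem hJ] with x hx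
    have hx0 : 0 < x := hJpos x hx
    rw [ENNReal.toReal_ofReal (by positivity)]
    rw [Real.norm_of_nonneg (by positivity)]
    exact hdom x hx

theorem my_key_small (r D : ℝ) (hr : 0 < r) (hD : 0 < D) :
    IntegrableOn (fun x : ℝ => x ^ r * (1 + |Real.log x|) ^ D) (Set.Ioc 0 1)
      (volume.withDensity fun x : ℝ => ENNReal.ofReal x⁻¹) := by
  set ε := min 1 (r / (2 * D)) with hεdef
  have hε0 : 0 < ε := lt_min one_pos (by positivity)
  have hε1 : ε ≤ 1 := min_le_left _ _
  have hεD : ε * D ≤ r / 2 := by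
    have h := min_le_right 1 (r / (2 * D))
    calc ε * D ≤ (r / (2 * D)) * D := mul_le_mul_of_nonneg_right h hD.le
      _ = r / 2 := by field_simp
  refine my_one_dim r D (ε⁻¹ ^ D) (r / 2 - 1) (Real.rpow_nonneg (inv_nonneg.2 hε0.le) D) _ measurableSet_Ioc
      (fun x hx => hx.1) ?_ ?_
  · intro x hx
    obtain ⟨hx0, hx1⟩ := hx
    have hlog : Real.log x ≤ 0 := Real.log_nonpos hx0.le hx1
    have habs : |Real.log x| = -Real.log x := abs_of_nonpos hlog
    have hkey : (1 + |Real.log x|) ^ D ≤ ε⁻¹ ^ D * Real.exp ((r / 2) * |Real.log x|) :=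
      my_rpow_bound hε0 hε1 hD.le (abs_nonneg _) hεD
    have hexp : Real.exp ((r / 2) * |Real.log x|) = x ^ (-(r / 2)) := by
      rw [Real.rpow_def_of_pos hx0, habs]; ring_nf
    calc x ^ r * (1 + |Real.log x|) ^ D * x⁻¹
        ≤ x ^ r * (ε⁻¹ ^ D * x ^ (-(r / 2))) * x⁻¹ := by
          rw [← hexp]
          have hxr : (0:ℝ) ≤ x ^ r := Real.rpow_nonneg hx0.le r
          have hxi : (0:ℝ) ≤ x⁻¹ := by positivity
          exact mul_le_mul_of_nonneg_right (mul_le_mul_of_nonneg_left hkey hxr) hxi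
      _ = ε⁻¹ ^ D * (x ^ r * x ^ (-(r / 2)) * x ^ (-1 : ℝ)) := by
          rw [Real.rpow_neg_one]; ring
      _ = ε⁻¹ ^ D * x ^ (r / 2 - 1) := by
          rw [← Real.rpow_add hx0, ← Real.rpow_add hx0]; ring_nf
  · have h := (intervalIntegral.integrableOn_Ioo_rpow_iff (s := r / 2 - 1) one_pos).2 (by linarith)
    exact h.congr_set_ae Ioo_ae_eq_Ioc.symm

theorem my_key_big (r D : ℝ) (hr : r < 0) (hD : 0 < D) :
    IntegrableOn (fun x : ℝ => x ^ r * (1 + |Real.log x|) ^ D) (Set.Ici 1)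
      (volume.withDensity fun x : ℝ => ENNReal.ofReal x⁻¹) := by
  set ε := min 1 (-r / (2 * D)) with hεdef
  have hε0 : 0 < ε := lt_min one_pos (div_pos (by linarith) (by positivity))
  have hε1 : ε ≤ 1 := min_le_left _ _
  have hεD : ε * D ≤ -r / 2 := by
    have h := min_le_right 1 (-r / (2 * D))
    calc ε * D ≤ (-r / (2 * D)) * D := mul_le_mul_of_nonneg_right h hD.le
      _ = -r / 2 := by field_simp
  refine my_one_dim r D (ε⁻¹ ^ D) (r / 2 - 1) (Real.rpow_nonneg (inv_nonneg.2 hε0.le) D) _ measurableSet_Ici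
      (fun x hx => lt_of_lt_of_le one_pos hx) ?_ ?_
  · intro x hx
    have hx0 : (0:ℝ) < x := lt_of_lt_of_le one_pos hx
    have hlog : 0 ≤ Real.log x := Real.log_nonneg hx
    have habs : |Real.log x| = Real.log x := abs_of_nonneg hlog
    have hkey : (1 + |Real.log x|) ^ D ≤ ε⁻¹ ^ D * Real.exp ((-r / 2) * |Real.log x|) :=
      my_rpow_bound hε0 hε1 hD.le (abs_nonneg _) hεD
    have hexp : Real.exp ((-r / 2) * |Real.log x|) = x ^ (-(r / 2)) := by
      rw [Real.rpow_def_of_pos hx0, habs]; ring_nf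
    calc x ^ r * (1 + |Real.log x|) ^ D * x⁻¹
        ≤ x ^ r * (ε⁻¹ ^ D * x ^ (-(r / 2))) * x⁻¹ := by
          rw [← hexp]
          have hxr : (0:ℝ) ≤ x ^ r := Real.rpow_nonneg hx0.le r
          have hxi : (0:ℝ) ≤ x⁻¹ := by positivity
          exact mul_le_mul_of_nonneg_right (mul_le_mul_of_nonneg_left hkey hxr) hxi
      _ = ε⁻¹ ^ D * (x ^ r * x ^ (-(r / 2)) * x ^ (-1 : ℝ)) := by
          rw [Real.rpow_neg_one]; ring
      _ = ε⁻¹ ^ D * x ^ (r / 2 - 1) := by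
          rw [← Real.rpow_add hx0, ← Real.rpow_add hx0]; ring_nf
  · have h := integrableOn_Ioi_rpow_of_lt (a := r / 2 - 1) (by linarith) one_pos
    exact h.congr_set_ae Ioi_ae_eq_Ici.symm

end Aux

/-- Lemma 2.2 of the paper: the basic calculus convergence lemma.  The function
`x ↦ (∏ j x_j^{r_j}) (1 - ∑_{j<i} log x_j + ∑_{k≥i} log x_k)^D` is integrable on the
region `x_1 ≤ ⋯ ≤ x_i ≤ 1 ≤ x_{i+1} ≤ ⋯ ≤ x_n` of `(0,∞)^n` with respect to the
multiplicative Haar measure `∏ dx_j / x_j`. -/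
theorem stmt0 (n : ℕ) (hn : 1 ≤ n) (i : ℕ) (hi : i ≤ n) (D : ℝ) (hD : 0 < D)
    (r : Fin n → ℝ) (hrpos : ∀ j : Fin n, (j : ℕ) < i → 0 < r j)
    (hrneg : ∀ j : Fin n, i ≤ (j : ℕ) → r j < 0) :
    IntegrableOn
      (fun x : Fin n → ℝ =>
        (∏ j : Fin n, x j ^ r j) *
          (1 - (∑ j ∈ Finset.univ.filter fun j : Fin n => (j : ℕ) < i, Real.log (x j))
             + ∑ j ∈ Finset.univ.filter fun j : Fin n => i ≤ (j : ℕ), Real.log (x j)) ^ D)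
      {x : Fin n → ℝ | (∀ j, 0 < x j) ∧ (∀ j k : Fin n, j ≤ k → x j ≤ x k) ∧
        (∀ j : Fin n, (j : ℕ) < i → x j ≤ 1) ∧ ∀ j : Fin n, i ≤ (j : ℕ) → 1 ≤ x j}
      (Measure.pi fun _ : Fin n => volume.withDensity fun x : ℝ => ENNReal.ofReal x⁻¹) := by
  classical
  set μ0 : Measure ℝ := volume.withDensity fun x : ℝ => ENNReal.ofReal x⁻¹ with hμ0
  set s : Set (Fin n → ℝ) :=
    {x : Fin n → ℝ | (∀ j, 0 < x j) ∧ (∀ j k : Fin n, j ≤ k → x j ≤ x k) ∧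
        (∀ j : Fin n, (j : ℕ) < i → x j ≤ 1) ∧ ∀ j : Fin n, i ≤ (j : ℕ) → 1 ≤ x j} with hsdef
  -- measurability of the region
  have hs : MeasurableSet s := by
    rw [hsdef]
    simp only [Set.setOf_and]
    refine MeasurableSet.inter ?_ (MeasurableSet.inter ?_ (MeasurableSet.inter ?_ ?_))
    · rw [Set.setOf_forall]
      exact MeasurableSet.iInter fun j =>
        measurableSet_lt measurable_const (measurable_pi_apply j)
    · rw [Set.setOf_forall]
      refine MeasurableSet.iInter fun j => ?_
      rw [Set.setOf_forall]
      refine MeasurableSet.iInter fun k => ?_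
      rw [Set.setOf_forall]
      refine MeasurableSet.iInter fun _ => ?_
      exact measurableSet_le (measurable_pi_apply j) (measurable_pi_apply k)
    · rw [Set.setOf_forall]
      refine MeasurableSet.iInter fun j => ?_
      by_cases hj : (j : ℕ) < i
      · simp only [hj, forall_true_left]
        exact measurableSet_le (measurable_pi_apply j) measurable_const
      · simp only [hj, IsEmpty.forall_iff, Set.setOf_true, MeasurableSet.univ]
    · rw [Set.setOf_forall]
      refine MeasurableSet.iInter fun j => ?_
      by_cases hj : i ≤ (j : ℕ)
      · simp only [hj, forall_true_left]
        exact measurableSet_le measurable_const (measurable_pi_apply j)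
      · simp only [hj, IsEmpty.forall_iff, Set.setOf_true, MeasurableSet.univ]
  -- the intervals and the dominating one-variable functions
  set I : Fin n → Set ℝ := fun j => if (j : ℕ) < i then Set.Ioc 0 1 else Set.Ici 1 with hIdef
  set f : Fin n → ℝ → ℝ :=
    fun j => (I j).indicator (fun x => x ^ r j * (1 + |Real.log x|) ^ D) with hfdef
  have hmem : ∀ x ∈ s, ∀ j : Fin n, x j ∈ I j := by
    intro x hx j
    obtain ⟨h0, -, h1, h2⟩ := hx
    rw [hIdef]
    by_cases hj : (j : ℕ) < i
    · simp only [hj, if_true]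
      exact ⟨h0 j, h1 j hj⟩
    · simp only [hj, if_false]
      exact h2 j (Nat.le_of_not_lt hj)
  have h1dim : ∀ j : Fin n, Integrable (f j) μ0 := by
    intro j
    by_cases hj : (j : ℕ) < i
    · have hIj : I j = Set.Ioc 0 1 := by rw [hIdef]; simp [hj]
      have : Integrable ((I j).indicator fun x => x ^ r j * (1 + |Real.log x|) ^ D) μ0 := by
        rw [hIj, integrable_indicator_iff measurableSet_Ioc]
        exact my_key_small (r j) D (hrpos j hj) hD
      exact this
    · have hIj : I j = Set.Ici 1 := by rw [hIdef]; simp [hj]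
      have : Integrable ((I j).indicator fun x => x ^ r j * (1 + |Real.log x|) ^ D) μ0 := by
        rw [hIj, integrable_indicator_iff measurableSet_Ici]
        exact my_key_big (r j) D (hrneg j (Nat.le_of_not_lt hj)) hD
      exact this
  have hprod : Integrable (fun x : Fin n → ℝ => ∏ j, f j (x j))
      (Measure.pi fun _ : Fin n => μ0) := my_pi_prod_integrable _ h1dim
  -- the key rewriting of the logarithmic bracket on the region
  have hkey : ∀ x ∈ s,
      (1 - (∑ j ∈ Finset.univ.filter fun j : Fin n => (j : ℕ) < i, Real.log (x j))
        + ∑ j ∈ Finset.univ.filter fun j : Fin n => i ≤ (j : ℕ), Real.log (x j))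
      = 1 + ∑ j : Fin n, |Real.log (x j)| := by
    intro x hx
    obtain ⟨h0, -, h1, h2⟩ := hx
    have hsplit := Finset.sum_filter_add_sum_filter_not Finset.univ
      (fun j : Fin n => (j : ℕ) < i) (fun j => |Real.log (x j)|)
    have e1 : (∑ j ∈ Finset.univ.filter fun j : Fin n => (j : ℕ) < i, |Real.log (x j)|)
        = -∑ j ∈ Finset.univ.filter fun j : Fin n => (j : ℕ) < i, Real.log (x j) := by
      rw [← Finset.sum_neg_distrib]
      refine Finset.sum_congr rfl fun j hj => ?_
      have hj' : (j : ℕ) < i := (Finset.mem_filter.1 hj).2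
      exact abs_of_nonpos (Real.log_nonpos (h0 j).le (h1 j hj'))
    have efil : (Finset.univ.filter fun j : Fin n => ¬(j : ℕ) < i)
        = Finset.univ.filter fun j : Fin n => i ≤ (j : ℕ) := by
      refine Finset.filter_congr fun j _ => ?_
      simp [Nat.not_lt]
    have e2 : (∑ j ∈ Finset.univ.filter fun j : Fin n => ¬(j : ℕ) < i, |Real.log (x j)|)
        = ∑ j ∈ Finset.univ.filter fun j : Fin n => i ≤ (j : ℕ), Real.log (x j) := by
      rw [efil]
      refine Finset.sum_congr rfl fun j hj => ?_
      have hj' : i ≤ (j : ℕ) := (Finset.mem_filter.1 hj).2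
      exact abs_of_nonneg (Real.log_nonneg (h2 j hj'))
    rw [← hsplit, e1, e2]
    ring
  rw [IntegrableOn]
  refine Integrable.mono' (hprod.integrableOn) ?_ ?_
  · -- a.e. strong measurability on the region
    have hGm : Measurable (fun x : Fin n → ℝ =>
        Real.exp (∑ j : Fin n, Real.log (x j) * r j) *
        Real.exp (Real.log
          (1 - (∑ j ∈ Finset.univ.filter fun j : Fin n => (j : ℕ) < i, Real.log (x j))
             + ∑ j ∈ Finset.univ.filter fun j : Fin n => i ≤ (j : ℕ), Real.log (x j)) * D)) := by
      have hsum : ∀ (t : Finset (Fin n)), Measurable fun x : Fin n → ℝ =>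
          ∑ j ∈ t, Real.log (x j) :=
        fun t => Finset.measurable_sum t fun j _ =>
          Real.measurable_log.comp (measurable_pi_apply j)
      refine Measurable.mul ?_ ?_
      · exact Real.measurable_exp.comp (Finset.measurable_sum _ fun j _ =>
          (Real.measurable_log.comp (measurable_pi_apply j)).mul_const (r j))
      · refine Real.measurable_exp.comp (Measurable.mul_const ?_ D)
        exact Real.measurable_log.comp
          (((measurable_const.sub (hsum _)).add (hsum _)))
    refine hGm.aestronglyMeasurable.congr ?_
    filter_upwards [ae_restrict_mem hs] with x hx
    have h0 : ∀ j, 0 < x j := hx.1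
    have hbr := hkey x hx
    have hbrpos : (0:ℝ) <
        (1 - (∑ j ∈ Finset.univ.filter fun j : Fin n => (j : ℕ) < i, Real.log (x j))
          + ∑ j ∈ Finset.univ.filter fun j : Fin n => i ≤ (j : ℕ), Real.log (x j)) := by
      rw [hbr]
      have : (0:ℝ) ≤ ∑ j : Fin n, |Real.log (x j)| :=
        Finset.sum_nonneg fun j _ => abs_nonneg _
      linarith
    have e1 : Real.exp (∑ j : Fin n, Real.log (x j) * r j) = ∏ j : Fin n, x j ^ r j := by
      rw [Real.exp_sum]
      exact Finset.prod_congr rfl fun j _ => (Real.rpow_def_of_pos (h0 j) (r j)).symm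
    rw [e1, ← Real.rpow_def_of_pos hbrpos]
  · -- the pointwise domination
    filter_upwards [ae_restrict_mem hs] with x hx
    have h0 : ∀ j, 0 < x j := hx.1
    have hbr := hkey x hx
    have hsum0 : (0:ℝ) ≤ ∑ j : Fin n, |Real.log (x j)| :=
      Finset.sum_nonneg fun j _ => abs_nonneg _
    have hP0 : (0:ℝ) ≤ ∏ j : Fin n, x j ^ r j :=
      Finset.prod_nonneg fun j _ => Real.rpow_nonneg (h0 j).le _
    rw [Real.norm_of_nonneg]
    swap
    · refine mul_nonneg hP0 (Real.rpow_nonneg ?_ _)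
      rw [hbr]; linarith
    rw [hbr]
    have h3 : (1 + ∑ j : Fin n, |Real.log (x j)|) ^ D
        ≤ (∏ j : Fin n, (1 + |Real.log (x j)|)) ^ D :=
      Real.rpow_le_rpow (by linarith)
        (my_one_add_sum_le_prod Finset.univ _ fun j _ => abs_nonneg _) hD.le
    have h4 : (∏ j : Fin n, (1 + |Real.log (x j)|)) ^ D
        = ∏ j : Fin n, (1 + |Real.log (x j)|) ^ D :=
      (Real.finset_prod_rpow Finset.univ _ (fun j _ => by positivity) D).symm
    calc (∏ j : Fin n, x j ^ r j) * (1 + ∑ j : Fin n, |Real.log (x j)|) ^ D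
        ≤ (∏ j : Fin n, x j ^ r j) * ∏ j : Fin n, (1 + |Real.log (x j)|) ^ D := by
          rw [← h4]
          exact mul_le_mul_of_nonneg_left h3 hP0
      _ = ∏ j : Fin n, (x j ^ r j * (1 + |Real.log (x j)|) ^ D) := by
          rw [Finset.prod_mul_distrib]
      _ = ∏ j : Fin n, f j (x j) := by
          refine Finset.prod_congr rfl fun j _ => ?_
          exact (Set.indicator_of_mem (hmem x hx j)
            (fun y => y ^ r j * (1 + |Real.log y|) ^ D)).symm
end

section
/- With notation as in the context (so n = 2m): (i) every g ∈ B_{n+2} that maps V_{n+1} to itself and restricts to an isometry of V_{n+1} extending by the identity (i.e., every element of B_{n+2} ∩ U(V_{n+1})) lies in B_n; and (ii) if η ∈ U(V_{n+1}) satisfies η B_n η^{−1} ∩ B_{n+1} = {1}, then B_{n+2} ∩ η^{−1} B_{n+1} η = {1}. -/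
noncomputable section

namespace GrossPrasadEven

/-- The ambient hermitian space `V_{n+2}` (for `n = 2m`), realized as pairs of
coordinate vectors: `e i = (δ_i, 0)` and `f i = (0, δ_i)` for `i : Fin (m+1)`. -/
abbrev Amb (E : Type) [Field E] (m : ℕ) := (Fin (m + 1) → E) × (Fin (m + 1) → E)

/-- The isotropic basis vector `e_i`. -/
def e (E : Type) [Field E] (m : ℕ) (i : Fin (m + 1)) : Amb E m := (Pi.single i 1, 0)

/-- The isotropic basis vector `f_i`. -/
def f (E : Type) [Field E] (m : ℕ) (i : Fin (m + 1)) : Amb E m := (0, Pi.single i 1)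

/-- The hermitian form with `h(e_i, e_j) = h(f_i, f_j) = 0` and `h(e_i, f_j) = δ_{ij}`;
it is `τ`-sesquilinear and satisfies `h(y,x) = τ(h(x,y))` when `τ ∘ τ = id`. -/
def herm (E : Type) [Field E] (m : ℕ) (τ : E →+* E) (x y : Amb E m) : E :=
  (∑ k, x.1 k * τ (y.2 k)) + ∑ k, x.2 k * τ (y.1 k)

/-- `g` is an isometry of the hermitian form (a member of the unitary group
`U(V_{n+2})`). -/
def IsIsom (E : Type) [Field E] (m : ℕ) (τ : E →+* E)
    (g : Amb E m ≃ₗ[E] Amb E m) : Prop :=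
  ∀ x y : Amb E m, herm E m τ (g x) (g y) = herm E m τ x y

/-- The isotropic subspace `⟨e_1, …, e_k⟩` (with `0`-based indexing `i < k`). -/
def Ek (E : Type) [Field E] (m : ℕ) (k : ℕ) : Submodule E (Amb E m) :=
  Submodule.span E (e E m '' {i : Fin (m + 1) | (i : ℕ) < k})

/-- The subspace `V_n = ⟨e_1, …, e_m, f_1, …, f_m⟩`. -/
def Vn (E : Type) [Field E] (m : ℕ) : Submodule E (Amb E m) :=
  Submodule.span E
    (e E m '' {i : Fin (m + 1) | (i : ℕ) < m} ∪ f E m '' {i : Fin (m + 1) | (i : ℕ) < m})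

/-- The subspace `V_{n+1} = V_n ⊕ E·(e_{m+1} + f_{m+1})`. -/
def Vn1 (E : Type) [Field E] (m : ℕ) : Submodule E (Amb E m) :=
  Vn E m ⊔ Submodule.span E {e E m (Fin.last m) + f E m (Fin.last m)}

/-- The members of the flag `F_{n+2}`: `⟨e_{m+1}, e_1, …, e_k⟩` for `0 ≤ k ≤ m`. -/
def Fk (E : Type) [Field E] (m : ℕ) (k : ℕ) : Submodule E (Amb E m) :=
  Submodule.span E {e E m (Fin.last m)} ⊔ Ek E m k

/-- Membership in `B_n`: an isometry lying in `U(V_n)` (it fixes the orthogonal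
complement `⟨e_{m+1}, f_{m+1}⟩` pointwise and preserves `V_n`) stabilizing the flag
`F_n`. -/
def Bn (E : Type) [Field E] (m : ℕ) (τ : E →+* E) (g : Amb E m ≃ₗ[E] Amb E m) : Prop :=
  IsIsom E m τ g ∧
    g (e E m (Fin.last m)) = e E m (Fin.last m) ∧
    g (f E m (Fin.last m)) = f E m (Fin.last m) ∧
    (Vn E m).map g.toLinearMap = Vn E m ∧
    ∀ k : ℕ, 1 ≤ k → k ≤ m → (Ek E m k).map g.toLinearMap = Ek E m k

/-- Membership in `B_{n+1}`: an isometry lying in `U(V_{n+1})` (it fixes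
`e_{m+1} - f_{m+1}` and preserves `V_{n+1}`) stabilizing the flag `F_{n+1}`. -/
def Bn1 (E : Type) [Field E] (m : ℕ) (τ : E →+* E) (g : Amb E m ≃ₗ[E] Amb E m) : Prop :=
  IsIsom E m τ g ∧
    g (e E m (Fin.last m) - f E m (Fin.last m)) =
      e E m (Fin.last m) - f E m (Fin.last m) ∧
    (Vn1 E m).map g.toLinearMap = Vn1 E m ∧
    ∀ k : ℕ, 1 ≤ k → k ≤ m → (Ek E m k).map g.toLinearMap = Ek E m k

/-- Membership in `B_{n+2}`: an isometry stabilizing the flag `F_{n+2}`. -/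
def Bn2 (E : Type) [Field E] (m : ℕ) (τ : E →+* E) (g : Amb E m ≃ₗ[E] Amb E m) : Prop :=
  IsIsom E m τ g ∧ ∀ k : ℕ, k ≤ m → (Fk E m k).map g.toLinearMap = Fk E m k

/-- Membership in `U(V_{n+1})` inside `U(V_{n+2})`: an isometry mapping `V_{n+1}` to
itself and extending by the identity on the orthogonal complement
`E·(e_{m+1} - f_{m+1})`. -/
def MemUn1 (E : Type) [Field E] (m : ℕ) (τ : E →+* E)
    (g : Amb E m ≃ₗ[E] Amb E m) : Prop :=
  IsIsom E m τ g ∧ (∀ x ∈ Vn1 E m, g x ∈ Vn1 E m) ∧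
    g (e E m (Fin.last m) - f E m (Fin.last m)) =
      e E m (Fin.last m) - f E m (Fin.last m)

section Aux

variable {E : Type} [Field E] {m : ℕ}

lemma decomp (x : Amb E m) :
    x = ∑ i, x.1 i • e E m i + ∑ i, x.2 i • f E m i := by
  refine Prod.ext ?_ ?_ <;>
  · funext j
    simp [e, f, Prod.fst_sum, Prod.snd_sum, Finset.sum_apply, Pi.single_apply, mul_ite,
      Finset.sum_ite_eq']

/-- Coordinate-constraint submodule. -/
def coordSub (E : Type) [Field E] (m : ℕ) (s t : Set (Fin (m + 1))) :
    Submodule E (Amb E m) where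
  carrier := {x | (∀ i ∉ s, x.1 i = 0) ∧ ∀ i ∉ t, x.2 i = 0}
  add_mem' := by
    rintro a b ⟨h1, h2⟩ ⟨h3, h4⟩
    exact ⟨fun i hi => by simp [h1 i hi, h3 i hi], fun i hi => by simp [h2 i hi, h4 i hi]⟩
  zero_mem' := by simp
  smul_mem' := by
    rintro c a ⟨h1, h2⟩
    exact ⟨fun i hi => by simp [h1 i hi], fun i hi => by simp [h2 i hi]⟩

lemma mem_span_ef (s t : Set (Fin (m + 1))) (x : Amb E m) :
    x ∈ Submodule.span E (e E m '' s ∪ f E m '' t) ↔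
      (∀ i ∉ s, x.1 i = 0) ∧ ∀ i ∉ t, x.2 i = 0 := by
  constructor
  · intro hx
    suffices h : Submodule.span E (e E m '' s ∪ f E m '' t) ≤ coordSub E m s t from h hx
    rw [Submodule.span_le]
    rintro y (⟨i, hi, rfl⟩ | ⟨i, hi, rfl⟩)
    · exact ⟨fun j hj => Pi.single_eq_of_ne (by rintro rfl; exact hj hi) 1, fun j _ => rfl⟩
    · exact ⟨fun j _ => rfl, fun j hj => Pi.single_eq_of_ne (by rintro rfl; exact hj hi) 1⟩
  · rintro ⟨h1, h2⟩
    rw [decomp x]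
    apply Submodule.add_mem
    · refine Submodule.sum_mem _ fun i _ => ?_
      by_cases hi : i ∈ s
      · exact Submodule.smul_mem _ _ (Submodule.subset_span (Or.inl ⟨i, hi, rfl⟩))
      · rw [h1 i hi, zero_smul]; exact Submodule.zero_mem _
    · refine Submodule.sum_mem _ fun i _ => ?_
      by_cases hi : i ∈ t
      · exact Submodule.smul_mem _ _ (Submodule.subset_span (Or.inr ⟨i, hi, rfl⟩))
      · rw [h2 i hi, zero_smul]; exact Submodule.zero_mem _

lemma mem_Ek_iff (k : ℕ) (x : Amb E m) :
    x ∈ Ek E m k ↔ x.2 = 0 ∧ ∀ i : Fin (m + 1), k ≤ (i : ℕ) → x.1 i = 0 := by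
  have h : Ek E m k
      = Submodule.span E (e E m '' {i : Fin (m+1) | (i : ℕ) < k} ∪ f E m '' (∅ : Set _)) := by
    simp [Ek]
  rw [h, mem_span_ef]
  constructor
  · rintro ⟨h1, h2⟩
    exact ⟨funext fun i => h2 i (Set.notMem_empty i),
      fun i hi => h1 i (by simpa using not_lt.2 hi)⟩
  · rintro ⟨h1, h2⟩
    exact ⟨fun i hi => h2 i (not_lt.1 (by simpa using hi)), fun i _ => by rw [h1]; rfl⟩

lemma mem_Fk_iff (k : ℕ) (x : Amb E m) :
    x ∈ Fk E m k ↔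
      x.2 = 0 ∧ ∀ i : Fin (m + 1), i ≠ Fin.last m → k ≤ (i : ℕ) → x.1 i = 0 := by
  have h : Fk E m k
      = Submodule.span E (e E m '' ({Fin.last m} ∪ {i : Fin (m+1) | (i : ℕ) < k})
          ∪ f E m '' (∅ : Set _)) := by
    rw [Set.image_empty, Set.union_empty, Set.image_union, Set.image_singleton,
      Submodule.span_union, Fk, Ek]
  rw [h, mem_span_ef]
  constructor
  · rintro ⟨h1, h2⟩
    refine ⟨funext fun i => h2 i (Set.notMem_empty i), fun i hne hi => h1 i ?_⟩
    simp only [Set.mem_union, Set.mem_singleton_iff, Set.mem_setOf_eq]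
    push_neg
    exact ⟨hne, hi⟩
  · rintro ⟨h1, h2⟩
    refine ⟨fun i hi => ?_, fun i _ => by rw [h1]; rfl⟩
    simp only [Set.mem_union, Set.mem_singleton_iff, Set.mem_setOf_eq] at hi
    push_neg at hi
    exact h2 i hi.1 hi.2

lemma mem_Vn_iff (x : Amb E m) :
    x ∈ Vn E m ↔ x.1 (Fin.last m) = 0 ∧ x.2 (Fin.last m) = 0 := by
  rw [Vn, show Submodule.span E _ = Submodule.span E
      (e E m '' {i : Fin (m+1) | (i : ℕ) < m} ∪ f E m '' {i : Fin (m+1) | (i : ℕ) < m})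
      from rfl, mem_span_ef]
  have hlast : ∀ i : Fin (m + 1), i ∉ {i : Fin (m+1) | (i : ℕ) < m} ↔ i = Fin.last m := by
    intro i
    simp only [Set.mem_setOf_eq, not_lt]
    constructor
    · intro h; exact Fin.ext (le_antisymm (Nat.lt_succ_iff.1 i.isLt) h)
    · rintro rfl; simp [Fin.last]
  constructor
  · rintro ⟨h1, h2⟩
    exact ⟨h1 _ ((hlast _).2 rfl), h2 _ ((hlast _).2 rfl)⟩
  · rintro ⟨h1, h2⟩
    exact ⟨fun i hi => by rw [(hlast i).1 hi]; exact h1,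
      fun i hi => by rw [(hlast i).1 hi]; exact h2⟩

lemma mem_Vn1_iff (x : Amb E m) :
    x ∈ Vn1 E m ↔ x.1 (Fin.last m) = x.2 (Fin.last m) := by
  constructor
  · intro hx
    rw [Vn1, Submodule.mem_sup] at hx
    obtain ⟨y, hy, z, hz, rfl⟩ := hx
    rw [Submodule.mem_span_singleton] at hz
    obtain ⟨c, rfl⟩ := hz
    rw [mem_Vn_iff] at hy
    simp [e, f, hy.1, hy.2]
  · intro hx
    have hmem : x - x.1 (Fin.last m) • (e E m (Fin.last m) + f E m (Fin.last m)) ∈ Vn E m := by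
      rw [mem_Vn_iff]
      constructor <;> simp [e, f, ← hx]
    rw [Vn1, Submodule.mem_sup]
    exact ⟨_, hmem, _, Submodule.smul_mem _ (x.1 (Fin.last m)) (Submodule.mem_span_singleton_self _),
      by abel⟩

lemma herm_v (τ : E →+* E) (x : Amb E m) :
    herm E m τ x (e E m (Fin.last m) - f E m (Fin.last m))
      = x.2 (Fin.last m) - x.1 (Fin.last m) := by
  simp [herm, e, f, Pi.single_apply, apply_ite τ, mul_ite, sub_eq_add_neg, add_comm]

lemma herm_u (τ : E →+* E) (x : Amb E m) :
    herm E m τ x (e E m (Fin.last m) + f E m (Fin.last m))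
      = x.1 (Fin.last m) + x.2 (Fin.last m) := by
  simp [herm, e, f, Pi.single_apply, apply_ite τ, mul_ite, add_comm]

lemma isIsom_symm (τ : E →+* E) (g : Amb E m ≃ₗ[E] Amb E m) (hg : IsIsom E m τ g) :
    IsIsom E m τ g.symm := fun x y => by
  rw [← hg (g.symm x) (g.symm y)]; simp

lemma map_eq_self (g : Amb E m ≃ₗ[E] Amb E m) (p : Submodule E (Amb E m))
    (h1 : ∀ x ∈ p, g x ∈ p) (h2 : ∀ x ∈ p, g.symm x ∈ p) :
    p.map g.toLinearMap = p := by
  apply le_antisymm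
  · rintro _ ⟨x, hx, rfl⟩; exact h1 x hx
  · intro x hx; exact ⟨g.symm x, h2 x hx, by simp⟩

lemma two_zero (h2 : (2 : E) ≠ 0) {a d : E} (h : d - a = 0) (h' : a + d = 0) :
    a = 0 ∧ d = 0 := by
  have hda : d = a := by linear_combination h
  have : (2 : E) * a = 0 := by linear_combination h' - h
  have ha : a = 0 := by
    rcases mul_eq_zero.1 this with h | h
    · exact absurd h h2
    · exact h
  exact ⟨ha, by rw [hda, ha]⟩

/-- If an isometry fixes `e_last - f_last`, it preserves `V_{n+1}`. -/
lemma preserves_Vn1 (τ : E →+* E) (g : Amb E m ≃ₗ[E] Amb E m) (hiso : IsIsom E m τ g)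
    (hv : g (e E m (Fin.last m) - f E m (Fin.last m))
      = e E m (Fin.last m) - f E m (Fin.last m)) :
    ∀ x ∈ Vn1 E m, g x ∈ Vn1 E m := by
  intro x hx
  rw [mem_Vn1_iff] at hx ⊢
  have h := hiso x (e E m (Fin.last m) - f E m (Fin.last m))
  rw [hv, herm_v, herm_v] at h
  linear_combination -h + hx

lemma mem_Ek_iff_inf (k : ℕ) (hk : k ≤ m) (x : Amb E m) :
    x ∈ Ek E m k ↔ x ∈ Fk E m k ∧ x ∈ Vn1 E m := by
  rw [mem_Ek_iff, mem_Fk_iff, mem_Vn1_iff]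
  constructor
  · rintro ⟨h1, h2⟩
    refine ⟨⟨h1, fun i _ hi => h2 i hi⟩, ?_⟩
    rw [h2 (Fin.last m) (by simp [Fin.last]; omega), h1]; rfl
  · rintro ⟨⟨h1, h2⟩, h3⟩
    have hl : x.1 (Fin.last m) = 0 := by rw [h3, h1]; rfl
    refine ⟨h1, fun i hi => ?_⟩
    by_cases hil : i = Fin.last m
    · rw [hil]; exact hl
    · exact h2 i hil hi

/-- Part (i). -/
lemma part_one (h2 : (2 : E) ≠ 0) (τ : E →+* E) (hm : 1 ≤ m)
    (g : Amb E m ≃ₗ[E] Amb E m) (hg2 : Bn2 E m τ g) (hgU : MemUn1 E m τ g) :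
    Bn E m τ g := by
  obtain ⟨hiso, hflag⟩ := hg2
  obtain ⟨-, -, hv⟩ := hgU
  set v := e E m (Fin.last m) - f E m (Fin.last m) with hvdef
  -- g e_last = e_last
  have hememF0 : e E m (Fin.last m) ∈ Fk E m 0 := by
    rw [mem_Fk_iff]
    exact ⟨rfl, fun i hne _ => Pi.single_eq_of_ne hne 1⟩
  have hgeF0 : g (e E m (Fin.last m)) ∈ Fk E m 0 := by
    rw [← hflag 0 (Nat.zero_le m)]
    exact Submodule.mem_map_of_mem hememF0
  rw [mem_Fk_iff] at hgeF0
  obtain ⟨hge2, hge1⟩ := hgeF0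
  have hkey := hiso (e E m (Fin.last m)) v
  rw [hv, herm_v, herm_v] at hkey
  have he2l : (g (e E m (Fin.last m))).2 (Fin.last m) = 0 := by rw [hge2]; rfl
  have he1l : (g (e E m (Fin.last m))).1 (Fin.last m) = 1 := by
    have : (e E m (Fin.last m)).2 (Fin.last m) = 0 := rfl
    have h1 : (e E m (Fin.last m)).1 (Fin.last m) = 1 := by simp [e]
    rw [he2l, this, h1] at hkey
    linear_combination -hkey
  have he : g (e E m (Fin.last m)) = e E m (Fin.last m) := by
    refine Prod.ext (funext fun j => ?_) (by rw [hge2]; rfl)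
    by_cases hj : j = Fin.last m
    · rw [hj, he1l]; simp [e]
    · rw [hge1 j hj (Nat.zero_le _)]
      simp [e, Pi.single_eq_of_ne hj]
  have hf : g (f E m (Fin.last m)) = f E m (Fin.last m) := by
    have hfe : f E m (Fin.last m) = e E m (Fin.last m) - v := by rw [hvdef]; abel
    rw [hfe, map_sub, he, hv]
  have hu : g (e E m (Fin.last m) + f E m (Fin.last m))
      = e E m (Fin.last m) + f E m (Fin.last m) := by
    rw [map_add, he, hf]
  -- symm facts
  have hsiso := isIsom_symm τ g hiso
  have hsv : g.symm v = v := by conv_lhs => rw [← hv, g.symm_apply_apply]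
  have hse : g.symm (e E m (Fin.last m)) = e E m (Fin.last m) := by
    conv_lhs => rw [← he, g.symm_apply_apply]
  have hsu : g.symm (e E m (Fin.last m) + f E m (Fin.last m))
      = e E m (Fin.last m) + f E m (Fin.last m) := by
    conv_lhs => rw [← hu, g.symm_apply_apply]
  -- Vn preservation
  have hVnstep : ∀ (g' : Amb E m ≃ₗ[E] Amb E m), IsIsom E m τ g' → g' v = v →
      g' (e E m (Fin.last m) + f E m (Fin.last m))
        = e E m (Fin.last m) + f E m (Fin.last m) →
      ∀ x ∈ Vn E m, g' x ∈ Vn E m := by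
    intro g' hiso' hv' hu' x hx
    rw [mem_Vn_iff] at hx ⊢
    have hh1 := hiso' x v
    rw [hv', herm_v, herm_v, hx.1, hx.2] at hh1
    have hh2 := hiso' x (e E m (Fin.last m) + f E m (Fin.last m))
    rw [hu', herm_u, herm_u, hx.1, hx.2] at hh2
    exact two_zero h2 (by linear_combination hh1) (by linear_combination hh2)
  have hVn : (Vn E m).map g.toLinearMap = Vn E m :=
    map_eq_self g _ (hVnstep g hiso hv hu) (hVnstep g.symm hsiso hsv hsu)
  -- Vn1 preservation
  have hVn1f := preserves_Vn1 τ g hiso hv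
  have hVn1s := preserves_Vn1 τ g.symm hsiso hsv
  -- Ek preservation
  have hEk : ∀ k : ℕ, 1 ≤ k → k ≤ m → (Ek E m k).map g.toLinearMap = Ek E m k := by
    intro k _ hk
    refine map_eq_self g _ (fun x hx => ?_) (fun x hx => ?_)
    · rw [mem_Ek_iff_inf k hk] at hx ⊢
      refine ⟨?_, hVn1f x hx.2⟩
      rw [← hflag k hk]
      exact Submodule.mem_map_of_mem hx.1
    · rw [mem_Ek_iff_inf k hk] at hx ⊢
      refine ⟨?_, hVn1s x hx.2⟩
      have : x ∈ (Fk E m k).map g.toLinearMap := by rw [hflag k hk]; exact hx.1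
      obtain ⟨y, hy, hyx⟩ := this
      have : g.symm x = y := by rw [← hyx]; simp
      rw [this]; exact hy
  exact ⟨hiso, he, hf, hVn, hEk⟩

end Aux

/-- The even case (`n = 2m`) of the paper's Proposition 2.3:
(i) `B_{n+2} ∩ U(V_{n+1}) ⊆ B_n`; and (ii) if `η ∈ U(V_{n+1})` satisfies
`η B_n η⁻¹ ∩ B_{n+1} = {1}`, then `B_{n+2} ∩ η⁻¹ B_{n+1} η = {1}`. -/
theorem stmt1 (E : Type) [Field E] (h2 : (2 : E) ≠ 0) (τ : E →+* E)
    (hτ : ∀ x : E, τ (τ x) = x) (m : ℕ) (hm : 1 ≤ m) :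
    (∀ g : Amb E m ≃ₗ[E] Amb E m, Bn2 E m τ g → MemUn1 E m τ g → Bn E m τ g) ∧
    (∀ η : Amb E m ≃ₗ[E] Amb E m, MemUn1 E m τ η →
      (∀ b : Amb E m ≃ₗ[E] Amb E m, Bn E m τ b → Bn1 E m τ (η * b * η⁻¹) → b = 1) →
      ∀ g : Amb E m ≃ₗ[E] Amb E m, Bn2 E m τ g → Bn1 E m τ (η * g * η⁻¹) → g = 1) := by
  refine ⟨fun g hg2 hgU => part_one h2 τ hm g hg2 hgU, ?_⟩
  intro η hη H g hg2 hb'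
  obtain ⟨hηiso, hηV1, hηv⟩ := hη
  obtain ⟨hb'iso, hb'v, hb'V1, hb'Ek⟩ := hb'
  have hgiso : IsIsom E m τ g := hg2.1
  have hηsv : η.symm (e E m (Fin.last m) - f E m (Fin.last m))
      = e E m (Fin.last m) - f E m (Fin.last m) := by
    conv_lhs => rw [← hηv, η.symm_apply_apply]
  have hgv : g (e E m (Fin.last m) - f E m (Fin.last m))
      = e E m (Fin.last m) - f E m (Fin.last m) := by
    apply η.injective
    calc η (g (e E m (Fin.last m) - f E m (Fin.last m)))
        = η (g (η.symm (e E m (Fin.last m) - f E m (Fin.last m)))) := by rw [hηsv]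
      _ = (η * g * η⁻¹) (e E m (Fin.last m) - f E m (Fin.last m)) := rfl
      _ = e E m (Fin.last m) - f E m (Fin.last m) := hb'v
      _ = η (e E m (Fin.last m) - f E m (Fin.last m)) := hηv.symm
  have hBn : Bn E m τ g :=
    part_one h2 τ hm g hg2 ⟨hgiso, preserves_Vn1 τ g hgiso hgv, hgv⟩
  exact H g hBn ⟨hb'iso, hb'v, hb'V1, hb'Ek⟩

end GrossPrasadEven
end
end

section
/- Fix an integer l ≥ 1 and a real number q > 1, and set t := q^{−1/2}. Define the special tuples â := (q^{−l}, q^{−(l−1)}, …, q^{−1}) and b̂ := (q^{−l+1/2}, q^{−l+3/2}, …, q^{−1/2}). Then for all signed permutations w′, w ∈ W_l: if b_A(t; w′·â, w·b̂) ≠ 0, then both w′ and w are the identity element of W_l (i.e., the trivial permutation with no coordinates inverted). Consequently A_A(t; â, b̂) = c_A(t; â, b̂). -/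
noncomputable section

namespace GrossPrasadCaseA

/-- The group `W_l = (ℤ/2)^l ⋊ S_l` of signed permutations, encoded as a pair of a sign
vector and a permutation. -/
abbrev SignedPerm (l : ℕ) := (Fin l → Bool) × Equiv.Perm (Fin l)

/-- The action of a signed permutation on an `l`-tuple: permute and invert marked
coordinates, `((ε,σ)·a)_k = a_{σ⁻¹ k}^{ε_k}`. -/
def sact {l : ℕ} (w : SignedPerm l) (a : Fin l → ℂ) : Fin l → ℂ :=
  fun k => if w.1 k then (a (w.2⁻¹ k))⁻¹ else a (w.2⁻¹ k)

/-- The numerator `b(Ξ,ξ)⁻¹`-type product of Case A. -/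
def bA (l : ℕ) (t : ℂ) (a b : Fin l → ℂ) : ℂ :=
  (∏ j : Fin l, (1 - t * b j)) *
    (∏ p ∈ Finset.univ.filter fun p : Fin l × Fin l => p.1 ≤ p.2,
      ((1 - t * a p.1 * b p.2) * (1 - t * a p.1 * (b p.2)⁻¹))) *
    ∏ p ∈ Finset.univ.filter fun p : Fin l × Fin l => p.2 < p.1,
      ((1 - t * a p.1 * b p.2) * (1 - t * (a p.1)⁻¹ * b p.2))

/-- The factor `d_1(Ξ)` of Case A. -/
def d1A (l : ℕ) (a : Fin l → ℂ) : ℂ :=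
  (∏ i : Fin l, (1 - a i ^ 2)) *
    ∏ p ∈ Finset.univ.filter fun p : Fin l × Fin l => p.1 < p.2,
      ((1 - a p.1 * a p.2) * (1 - a p.1 * (a p.2)⁻¹))

/-- The factor `d_0(ξ)` of Case A. -/
def d0A (l : ℕ) (b : Fin l → ℂ) : ℂ :=
  (∏ i : Fin l, (1 - b i)) *
    ∏ p ∈ Finset.univ.filter fun p : Fin l × Fin l => p.1 < p.2,
      ((1 - b p.1 * b p.2) * (1 - b p.1 * (b p.2)⁻¹))

/-- `c(Ξ,ξ) = b(Ξ,ξ) / (d_1(Ξ) d_0(ξ))` of Case A. -/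
def cA (l : ℕ) (t : ℂ) (a b : Fin l → ℂ) : ℂ :=
  bA l t a b / (d1A l a * d0A l b)

/-- The Weyl-group sum `A_{Ξ,ξ} = ∑_{w',w ∈ W_l} c(w'Ξ, wξ)` of Case A. -/
def AA (l : ℕ) (t : ℂ) (a b : Fin l → ℂ) : ℂ :=
  ∑ w' : SignedPerm l, ∑ w : SignedPerm l, cA l t (sact w' a) (sact w b)

/-- GL-regularity: `a_i a_j ≠ 1` for `i ≤ j` and the `a_i` are pairwise distinct. -/
def GLRegular (l : ℕ) (a : Fin l → ℂ) : Prop :=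
  (∀ i j : Fin l, i ≤ j → a i * a j ≠ 1) ∧ ∀ i j : Fin l, i ≠ j → a i ≠ a j

/-- B-regularity: `b_i ≠ 1`, `b_i b_j ≠ 1` for `i < j`, and the `b_i` are pairwise
distinct. -/
def BRegular (l : ℕ) (b : Fin l → ℂ) : Prop :=
  (∀ i, b i ≠ 1) ∧ (∀ i j : Fin l, i < j → b i * b j ≠ 1) ∧
    ∀ i j : Fin l, i ≠ j → b i ≠ b j

/-- The identity element of the signed permutation group `W_l`. -/
def oneSP (l : ℕ) : SignedPerm l := (fun _ => false, 1)

/-- The special tuple `Ξ̂ = (q^{-l}, …, q^{-1})`, written in terms of `t = q^{-1/2}`. -/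
def ahat (l : ℕ) (t : ℂ) : Fin l → ℂ := fun i => t ^ (2 * (l - (i : ℕ)))

/-- The special tuple `ξ̂ = (q^{-l+1/2}, …, q^{-1/2})`, written in terms of
`t = q^{-1/2}`. -/
def bhat (l : ℕ) (t : ℂ) : Fin l → ℂ := fun i => t ^ (2 * (l - (i : ℕ)) - 1)

/-- Integer exponent of the `k`-th entry of `sact w (ahat l c)`. -/
def Aexp (l : ℕ) (w : SignedPerm l) (k : Fin l) : ℤ :=
  if w.1 k then -((2 * (l - (w.2⁻¹ k : ℕ)) : ℕ) : ℤ) else ((2 * (l - (w.2⁻¹ k : ℕ)) : ℕ) : ℤ)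

def Bexp (l : ℕ) (w : SignedPerm l) (k : Fin l) : ℤ :=
  if w.1 k then -((2 * (l - (w.2⁻¹ k : ℕ)) - 1 : ℕ) : ℤ)
  else ((2 * (l - (w.2⁻¹ k : ℕ)) - 1 : ℕ) : ℤ)

lemma _root_.Equiv.Perm.inv_apply_self {α : Type*} (σ : Equiv.Perm α) (x : α) :
    σ⁻¹ (σ x) = x := σ.symm_apply_apply x

lemma sact_ahat (l : ℕ) (c : ℂ) (w : SignedPerm l) (k : Fin l) :
    sact w (ahat l c) k = c ^ Aexp l w k := by
  unfold sact ahat Aexp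
  cases h : w.1 k <;>
    simp only [if_true, if_false, Bool.false_eq_true, zpow_neg, zpow_natCast]

lemma sact_bhat (l : ℕ) (c : ℂ) (w : SignedPerm l) (k : Fin l) :
    sact w (bhat l c) k = c ^ Bexp l w k := by
  unfold sact bhat Bexp
  cases h : w.1 k <;>
    simp only [if_true, if_false, Bool.false_eq_true, zpow_neg, zpow_natCast]

lemma sact_one {l : ℕ} (a : Fin l → ℂ) : sact (oneSP l) a = a := by
  funext k; simp [sact, oneSP]

lemma fac1 {c : ℂ} (hc : c ≠ 0) {y : ℤ} (h : 1 + y = 0) : 1 - c * c ^ y = 0 := by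
  have h2 : c * c ^ y = c ^ (1 + y) := by rw [zpow_add₀ hc, zpow_one]
  rw [h2, h, zpow_zero, sub_self]

lemma fac2 {c : ℂ} (hc : c ≠ 0) {x y : ℤ} (h : 1 + x + y = 0) :
    1 - c * c ^ x * c ^ y = 0 := by
  have h2 : c * c ^ x * c ^ y = c ^ (1 + x + y) := by
    rw [zpow_add₀ hc, zpow_add₀ hc, zpow_one]
  rw [h2, h, zpow_zero, sub_self]

lemma perm_eq_one {n : ℕ} (σ : Equiv.Perm (Fin n)) (h : StrictMono (σ : Fin n → Fin n)) :
    σ = 1 := by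
  have hr : Set.range (σ : Fin n → Fin n) = Set.range (id : Fin n → Fin n) := by
    rw [Set.range_id, Set.range_eq_univ.mpr σ.surjective]
  have h2 : (σ : Fin n → Fin n) = id := by
    classical
    exact (StrictMono.range_inj h strictMono_id).mp hr
  exact Equiv.ext fun x => congrFun h2 x

lemma key (l : ℕ) (hl : 1 ≤ l) (c : ℂ) (hc : c ≠ 0) (w' w : SignedPerm l)
    (hne : bA l c (sact w' (ahat l c)) (sact w (bhat l c)) ≠ 0) :
    w' = oneSP l ∧ w = oneSP l := by
  rw [bA] at hne
  have h12 := mul_ne_zero_iff.mp hne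
  have h3 := h12.2
  have h1 := (mul_ne_zero_iff.mp h12.1).1
  have h2 := (mul_ne_zero_iff.mp h12.1).2
  rw [Finset.prod_ne_zero_iff] at h1 h2 h3
  have ha : ∀ i, sact w' (ahat l c) i = c ^ Aexp l w' i := sact_ahat l c w'
  have hb : ∀ j, sact w (bhat l c) j = c ^ Bexp l w j := sact_bhat l c w
  -- The four non-vanishing conditions on exponents
  have H1 : ∀ j : Fin l, 1 + Bexp l w j ≠ 0 := by
    intro j hz
    have hf := h1 j (Finset.mem_univ j)
    rw [hb j] at hf
    exact hf (fac1 hc hz)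
  have H2 : ∀ i j : Fin l, 1 + Aexp l w' i + Bexp l w j ≠ 0 := by
    intro i j hz
    rcases le_or_gt i j with hij | hij
    · have hf := (mul_ne_zero_iff.mp
        (h2 (i, j) (Finset.mem_filter.mpr ⟨Finset.mem_univ _, hij⟩))).1
      rw [ha i, hb j] at hf
      exact hf (fac2 hc hz)
    · have hf := (mul_ne_zero_iff.mp
        (h3 (i, j) (Finset.mem_filter.mpr ⟨Finset.mem_univ _, hij⟩))).1
      rw [ha i, hb j] at hf
      exact hf (fac2 hc hz)
  have H3 : ∀ i j : Fin l, i ≤ j → 1 + Aexp l w' i + -(Bexp l w j) ≠ 0 := by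
    intro i j hij hz
    have hf := (mul_ne_zero_iff.mp
      (h2 (i, j) (Finset.mem_filter.mpr ⟨Finset.mem_univ _, hij⟩))).2
    rw [ha i, hb j, ← zpow_neg] at hf
    exact hf (fac2 hc hz)
  have H4 : ∀ i j : Fin l, j < i → 1 + -(Aexp l w' i) + Bexp l w j ≠ 0 := by
    intro i j hij hz
    have hf := (mul_ne_zero_iff.mp
      (h3 (i, j) (Finset.mem_filter.mpr ⟨Finset.mem_univ _, hij⟩))).2
    rw [ha i, hb j, ← zpow_neg] at hf
    exact hf (fac2 hc hz)
  clear hne h12 h1 h2 h3 ha hb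
  -- Step A: all signs are positive.
  have keyA : ∀ m : ℕ, ∀ j : Fin l, Bexp l w j ≠ -(2 * (m : ℤ) + 1) := by
    intro m
    induction m with
    | zero =>
      intro j hz
      exact H1 j (by omega)
    | succ m ih =>
      intro j hz
      have hjlt := (w.2⁻¹ j).isLt
      have hnb : (2 * (l - ((w.2⁻¹ j : Fin l) : ℕ)) - 1 : ℕ) = 2 * m + 3 := by
        unfold Bexp at hz
        split at hz <;> omega
      obtain ⟨i, hi⟩ : ∃ i, Aexp l w' i = 2 * ((m : ℤ) + 1) ∨
          Aexp l w' i = -(2 * ((m : ℤ) + 1)) := by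
        refine ⟨w'.2 ⟨l - (m + 1), by omega⟩, ?_⟩
        unfold Aexp
        rw [Equiv.Perm.inv_apply_self]
        cases hb : w'.1 (w'.2 ⟨l - (m + 1), by omega⟩) <;>
          simp only [hb, Bool.false_eq_true, if_false, if_true, Fin.val_mk]
        · left; omega
        · right; omega
      rcases hi with hi | hi
      · exact H2 i j (by omega)
      · obtain ⟨j', hj'⟩ : ∃ j', Bexp l w j' = 2 * (m : ℤ) + 1 ∨
            Bexp l w j' = -(2 * (m : ℤ) + 1) := by
          refine ⟨w.2 ⟨l - (m + 1), by omega⟩, ?_⟩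
          unfold Bexp
          rw [Equiv.Perm.inv_apply_self]
          cases hb : w.1 (w.2 ⟨l - (m + 1), by omega⟩) <;>
            simp only [hb, Bool.false_eq_true, if_false, if_true, Fin.val_mk]
          · left; omega
          · right; omega
        rcases hj' with hj' | hj'
        · exact H2 i j' (by omega)
        · exact ih j' hj'
  have hBval : ∀ j : Fin l, Bexp l w j = ((2 * (l - (w.2⁻¹ j : ℕ)) - 1 : ℕ) : ℤ) ∨
      Bexp l w j = -((2 * (l - (w.2⁻¹ j : ℕ)) - 1 : ℕ) : ℤ) := by
    intro j
    unfold Bexp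
    split
    · right; rfl
    · left; rfl
  have hBpos : ∀ j : Fin l, 0 < Bexp l w j := by
    intro j
    have hjlt := (w.2⁻¹ j).isLt
    rcases hBval j with h | h
    · omega
    · exact absurd (by omega : Bexp l w j = -(2 * ((l - (w.2⁻¹ j : ℕ) - 1 : ℕ) : ℤ) + 1))
        (keyA _ j)
  have hδ : ∀ j : Fin l, w.1 j = false := by
    intro j
    by_contra hbb
    rw [Bool.not_eq_false] at hbb
    have hp := hBpos j
    have hjlt := (w.2⁻¹ j).isLt
    unfold Bexp at hp
    rw [if_pos hbb] at hp
    omega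
  have hε : ∀ k : Fin l, w'.1 k = false := by
    intro k
    by_contra hbb
    rw [Bool.not_eq_false] at hbb
    have hklt := (w'.2⁻¹ k).isLt
    have hA : Aexp l w' k = -((2 * (l - (w'.2⁻¹ k : ℕ)) : ℕ) : ℤ) := by
      unfold Aexp; rw [if_pos hbb]
    obtain ⟨j, hj⟩ : ∃ j, Bexp l w j = 2 * ((l - (w'.2⁻¹ k : ℕ) : ℕ) : ℤ) - 1 := by
      refine ⟨w.2 ⟨l - (l - (w'.2⁻¹ k : ℕ)), by omega⟩, ?_⟩
      rcases hBval (w.2 ⟨l - (l - (w'.2⁻¹ k : ℕ)), by omega⟩) with h | h <;>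
        rw [Equiv.Perm.inv_apply_self] at h
      · rw [h]; simp only [Fin.val_mk]; omega
      · exfalso
        have := hBpos (w.2 ⟨l - (l - (w'.2⁻¹ k : ℕ)), by omega⟩)
        rw [h] at this
        simp only [Fin.val_mk] at this
        omega
    exact H2 k j (by omega)
  -- Step B: the permutations are the identity.
  have hAval : ∀ k : Fin l, Aexp l w' k = ((2 * (l - (w'.2⁻¹ k : ℕ)) : ℕ) : ℤ) := by
    intro k; unfold Aexp; rw [if_neg (by rw [hε k]; exact Bool.false_ne_true)]
  have hBval' : ∀ j : Fin l, Bexp l w j = ((2 * (l - (w.2⁻¹ j : ℕ)) - 1 : ℕ) : ℤ) := by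
    intro j; unfold Bexp; rw [if_neg (by rw [hδ j]; exact Bool.false_ne_true)]
  have M1 : ∀ u : Fin l, w'.2 u ≤ w.2 u := by
    intro u
    by_contra hlt
    push_neg at hlt
    refine H4 (w'.2 u) (w.2 u) hlt ?_
    rw [hAval, hBval', Equiv.Perm.inv_apply_self, Equiv.Perm.inv_apply_self]
    have := u.isLt
    omega
  have M2 : ∀ u v : Fin l, (v : ℕ) = (u : ℕ) + 1 → w.2 u < w'.2 v := by
    intro u v hv
    by_contra hle
    push_neg at hle
    refine H3 (w'.2 v) (w.2 u) hle ?_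
    rw [hAval, hBval', Equiv.Perm.inv_apply_self, Equiv.Perm.inv_apply_self]
    have := u.isLt
    have := v.isLt
    omega
  obtain ⟨n, rfl⟩ : ∃ n, l = n + 1 := ⟨l - 1, by omega⟩
  have hσ : StrictMono (w'.2 : Fin (n + 1) → Fin (n + 1)) := by
    rw [Fin.strictMono_iff_lt_succ]
    intro i
    exact lt_of_le_of_lt (M1 i.castSucc) (M2 i.castSucc i.succ (by simp))
  have hσ1 : w'.2 = 1 := perm_eq_one _ hσ
  have hτ : ∀ u : Fin (n + 1), w.2 u = u := by
    intro u
    have h1 : u ≤ w.2 u := by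
      have := M1 u
      rwa [hσ1, Equiv.Perm.one_apply] at this
    by_contra hne2
    have h2 : u < w.2 u := lt_of_le_of_ne h1 (fun h => hne2 h.symm)
    have hv : (u : ℕ) + 1 < n + 1 := by
      have := (w.2 u).isLt
      have := Fin.lt_iff_val_lt_val.mp h2
      omega
    have h3 := M2 u ⟨(u : ℕ) + 1, hv⟩ rfl
    rw [hσ1, Equiv.Perm.one_apply] at h3
    have := Fin.lt_iff_val_lt_val.mp h3
    simp only [Fin.val_mk] at this
    have := Fin.lt_iff_val_lt_val.mp h2
    omega
  have hτ1 : w.2 = 1 := Equiv.ext fun u => hτ u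
  constructor
  · rcases w' with ⟨ε, σ⟩
    rw [oneSP, Prod.mk.injEq]
    exact ⟨funext hε, hσ1⟩
  · rcases w with ⟨δ, τ⟩
    rw [oneSP, Prod.mk.injEq]
    exact ⟨funext hδ, hτ1⟩


/-- The key claim in the evaluation of `A_{Ξ,ξ}` in Case A: at the special point
`(Ξ̂, ξ̂)` every summand with `(w', w) ≠ (1, 1)` has vanishing numerator `b_A`, so only
the identity term survives and `A_A(t; Ξ̂, ξ̂) = c_A(t; Ξ̂, ξ̂)`. -/

theorem stmt8 (l : ℕ) (hl : 1 ≤ l) (q : ℝ) (hq : 1 < q) (t : ℂ)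
    (ht : t = ((Real.sqrt q)⁻¹ : ℝ)) :
    (∀ w' w : SignedPerm l,
      bA l t (sact w' (ahat l t)) (sact w (bhat l t)) ≠ 0 → w' = oneSP l ∧ w = oneSP l) ∧
    AA l t (ahat l t) (bhat l t) = cA l t (ahat l t) (bhat l t) := by
  have hq0 : (0 : ℝ) < q := lt_trans one_pos hq
  have hrne : t ≠ 0 := by
    rw [ht]
    exact Complex.ofReal_ne_zero.mpr (inv_ne_zero (ne_of_gt (Real.sqrt_pos.mpr hq0)))
  clear ht
  refine ⟨fun w' w h => key l hl t hrne w' w h, ?_⟩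
  rw [AA]
  rw [Finset.sum_eq_single (oneSP l)]
  · rw [Finset.sum_eq_single (oneSP l)]
    · rw [sact_one, sact_one]
    · intro w _ hw
      have hz : bA l t (sact (oneSP l) (ahat l t)) (sact w (bhat l t)) = 0 := by
        by_contra hb
        exact hw (key l hl t hrne _ _ hb).2
      rw [cA, hz, zero_div]
    · intro h
      exact absurd (Finset.mem_univ _) h
  · intro w' _ hw'
    refine Finset.sum_eq_zero fun w _ => ?_
    have hz : bA l t (sact w' (ahat l t)) (sact w (bhat l t)) = 0 := by
      by_contra hb
      exact hw' (key l hl t hrne _ _ hb).1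
    rw [cA, hz, zero_div]
  · intro h
    exact absurd (Finset.mem_univ _) h

end GrossPrasadCaseA
end
end
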